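/- Let P be a probability distribution on a finite set 𝒳 and Q ∈ 𝒫ₙ(𝒳) a type. Then Pⁿ(T_Q^n) ≤ 2^{-nD(Q‖P)}. -/

import Mathlib

open Finset Real
open scoped Classical BigOperators

/-- Probability of an event under a weight function on a finite sample space. -/
noncomputable def pr {Ω : Type*} [Fintype Ω] (p : Ω → ℝ) (E : Ω → Prop) : ℝ :=
  ∑ ω, if E ω then p ω else 0

/-- `p` is a probability mass function. -/
def IsPMF {Ω : Type*} [Fintype Ω] (p : Ω → ℝ) : Prop :=
  (∀ ω, 0 ≤ p ω) ∧ ∑ ω, p ω = 1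

/-- Shannon entropy (in bits) of a random variable `X` on a finite space. -/
noncomputable def Hent {Ω α : Type*} [Fintype Ω] [Fintype α] (p : Ω → ℝ) (X : Ω → α) : ℝ :=
  -∑ a, pr p (fun ω => X ω = a) * Real.logb 2 (pr p (fun ω => X ω = a))

/-- Mutual information (in bits) between random variables `X` and `Y`. -/
noncomputable def MI {Ω α β : Type*} [Fintype Ω] [Fintype α] [Fintype β]
    (p : Ω → ℝ) (X : Ω → α) (Y : Ω → β) : ℝ :=
  Hent p X + Hent p Y - Hent p (fun ω => (X ω, Y ω))

/-- Kullback–Leibler divergence (in bits) between distributions on a finite set. -/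
noncomputable def KL {S : Type*} [Fintype S] (Q P : S → ℝ) : ℝ :=
  ∑ s, Q s * Real.logb 2 (Q s / P s)

lemma prod_fiber {𝒳 : Type*} [Fintype 𝒳] [DecidableEq 𝒳] {n : ℕ} (P : 𝒳 → ℝ)
    (x : Fin n → 𝒳) :
    ∏ t, P (x t) = ∏ a, P a ^ (Finset.univ.filter (fun t => x t = a)).card := by
  rw [← Finset.prod_fiberwise_of_maps_to (fun t _ => Finset.mem_univ (x t)) (fun t => P (x t))]
  refine Finset.prod_congr rfl fun a _ => ?_
  rw [Finset.prod_congr rfl (fun t ht => by rw [(Finset.mem_filter.mp ht).2]),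
    Finset.prod_const]

theorem stmt9 {𝒳 : Type*} [Fintype 𝒳] [DecidableEq 𝒳] (n : ℕ) (hn : 0 < n)
    (P : 𝒳 → ℝ) (hP : (∀ a, 0 ≤ P a) ∧ ∑ a, P a = 1)
    (c : 𝒳 → ℕ) (hc : ∑ a, c a = n) :
    ∑ x ∈ Finset.univ.filter (fun x : Fin n → 𝒳 =>
        ∀ a, (Finset.univ.filter (fun t => x t = a)).card = c a), ∏ t, P (x t)
      ≤ (2 : ℝ) ^ (-(n : ℝ) *
          ∑ a, ((c a : ℝ) / n) * Real.logb 2 (((c a : ℝ) / n) / P a)) := by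
  have hn' : (n : ℝ) ≠ 0 := Nat.cast_ne_zero.mpr hn.ne'
  set S := Finset.univ.filter (fun x : Fin n → 𝒳 =>
      ∀ a, (Finset.univ.filter (fun t => x t = a)).card = c a) with hSdef
  set Q : 𝒳 → ℝ := fun a => (c a : ℝ) / n with hQdef
  have hQ0 : ∀ a, 0 ≤ Q a := fun a => by positivity
  have hPn : ∀ x ∈ S, ∏ t, P (x t) = ∏ a, P a ^ c a := by
    intro x hx
    rw [prod_fiber]
    exact Finset.prod_congr rfl fun a _ => by rw [(Finset.mem_filter.mp hx).2 a]
  have hsum : ∑ x ∈ S, ∏ t, P (x t) = (S.card : ℝ) * ∏ a, P a ^ c a := by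
    rw [Finset.sum_congr rfl hPn, Finset.sum_const, nsmul_eq_mul]
  rw [hsum]
  have hcount : (S.card : ℝ) * ∏ a, Q a ^ c a ≤ 1 := by
    have htot : ∑ x : Fin n → 𝒳, ∏ t, Q (x t) = 1 := by
      rw [← Fintype.piFinset_univ, ← Finset.prod_univ_sum (fun _ => Finset.univ) (fun _ a => Q a)]
      have h1 : ∑ a, Q a = 1 := by
        simp only [hQdef, ← Finset.sum_div, ← Nat.cast_sum, hc]
        field_simp
      rw [Finset.prod_congr rfl (fun _ _ => h1), Finset.prod_const, one_pow]
    have hQn : ∀ x ∈ S, ∏ t, Q (x t) = ∏ a, Q a ^ c a := by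
      intro x hx
      rw [prod_fiber]
      exact Finset.prod_congr rfl fun a _ => by rw [(Finset.mem_filter.mp hx).2 a]
    have hsub : ∑ x ∈ S, ∏ t, Q (x t) ≤ 1 := by
      rw [← htot]
      exact Finset.sum_le_sum_of_subset_of_nonneg (Finset.subset_univ S)
        (fun x _ _ => Finset.prod_nonneg fun t _ => hQ0 (x t))
    calc (S.card : ℝ) * ∏ a, Q a ^ c a = ∑ x ∈ S, ∏ t, Q (x t) := by
          rw [Finset.sum_congr rfl hQn, Finset.sum_const, nsmul_eq_mul]
      _ ≤ 1 := hsub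
  by_cases hcase : ∃ a, c a ≠ 0 ∧ P a = 0
  · obtain ⟨a, hca, hPa⟩ := hcase
    have : ∏ a, P a ^ c a = 0 :=
      Finset.prod_eq_zero (Finset.mem_univ a) (by rw [hPa]; exact zero_pow hca)
    rw [this, mul_zero]
    positivity
  · push_neg at hcase
    have hPpos : ∀ a, c a ≠ 0 → 0 < P a := fun a ha =>
      lt_of_le_of_ne (hP.1 a) (fun h => hcase a ha h.symm)
    set F := Finset.univ.filter (fun a => c a ≠ 0) with hFdef
    have hQpos : ∀ a ∈ F, 0 < Q a := by
      intro a ha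
      have h1 : c a ≠ 0 := (Finset.mem_filter.mp ha).2
      have : 0 < (c a : ℝ) := Nat.cast_pos.mpr (Nat.pos_of_ne_zero h1)
      positivity
    have hE : -(n : ℝ) * ∑ a, Q a * Real.logb 2 (Q a / P a)
        = ∑ a ∈ F, (c a : ℝ) * Real.logb 2 (P a / Q a) := by
      rw [Finset.mul_sum, ← Finset.sum_subset F.subset_univ (fun a _ ha => ?_)]
      · refine Finset.sum_congr rfl fun a ha => ?_
        have hca := (Finset.mem_filter.mp ha).2
        have hQa := hQpos a ha
        have hPa := hPpos a hca
        have h1 : -(n:ℝ) * Q a = -(c a : ℝ) := by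
          field_simp [hQdef]
          simp only [hQdef]; field_simp
        rw [← mul_assoc, h1, Real.logb_div hQa.ne' hPa.ne', Real.logb_div hPa.ne' hQa.ne']
        ring
      · have hca : c a = 0 := by simpa [hFdef] using ha
        have hQ : Q a = 0 := by simp [hQdef, hca]
        rw [hQ, zero_mul, mul_zero]
    rw [hE]
    have hRHS : (2 : ℝ) ^ (∑ a ∈ F, (c a : ℝ) * Real.logb 2 (P a / Q a))
        = ∏ a ∈ F, (P a / Q a) ^ c a := by
      rw [Real.rpow_def_of_pos two_pos, Finset.mul_sum, Real.exp_sum]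
      refine Finset.prod_congr rfl fun a ha => ?_
      rw [← Real.rpow_def_of_pos two_pos]
      have hr : 0 < P a / Q a := div_pos (hPpos a (Finset.mem_filter.mp ha).2) (hQpos a ha)
      rw [mul_comm ((c a : ℝ)), Real.rpow_mul (by norm_num : (0:ℝ) ≤ 2),
        Real.rpow_logb two_pos (by norm_num) hr, Real.rpow_natCast]
    rw [hRHS]
    have hP_F : ∏ a, P a ^ c a = ∏ a ∈ F, P a ^ c a := by
      refine (Finset.prod_subset F.subset_univ (fun a _ ha => ?_)).symm
      have : c a = 0 := by simpa [hFdef] using ha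
      rw [this, pow_zero]
    have hQ_F : ∏ a, Q a ^ c a = ∏ a ∈ F, Q a ^ c a := by
      refine (Finset.prod_subset F.subset_univ (fun a _ ha => ?_)).symm
      have : c a = 0 := by simpa [hFdef] using ha
      rw [this, pow_zero]
    have hsplit : ∏ a ∈ F, P a ^ c a = (∏ a ∈ F, Q a ^ c a) * ∏ a ∈ F, (P a / Q a) ^ c a := by
      rw [← Finset.prod_mul_distrib]
      refine Finset.prod_congr rfl fun a ha => ?_
      have hq := (hQpos a ha).ne'
      rw [← mul_pow, mul_comm (Q a), div_mul_cancel₀ _ hq]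
    have hprodnn : 0 ≤ ∏ a ∈ F, (P a / Q a) ^ c a :=
      Finset.prod_nonneg fun a ha => pow_nonneg (div_nonneg (hP.1 a) (hQ0 a)) _
    calc (S.card : ℝ) * ∏ a, P a ^ c a
        = ((S.card : ℝ) * ∏ a, Q a ^ c a) * ∏ a ∈ F, (P a / Q a) ^ c a := by
          rw [hP_F, hQ_F, hsplit]; ring
      _ ≤ 1 * ∏ a ∈ F, (P a / Q a) ^ c a := mul_le_mul_of_nonneg_right hcount hprodnn
      _ = _ := one_mul _
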